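/- Let c > 0 and p(s) = -√(c+1)·tanh(√(c+1)·s). Since √(c+1) > 1, the set where |p(s)| ≤ 1 is a bounded symmetric interval [-M, M] with (c+1)·tanh²(√(c+1)M) = 1. On (-M, M), z(s) = -log(cosh(√(c+1)s)) is bounded with a unique maximum at s = 0, and y'(s) = (1/cosh(√(c+1)s))·√(1 - (c+1)tanh²(√(c+1)s)) satisfies y'(±M) = 0 while |z'(±M)| = 1. -/

import Mathlib

open Real

lemma tanh_hasDerivAt (x : ℝ) : HasDerivAt Real.tanh (1 / Real.cosh x ^ 2) x := by
  have h := (Real.hasDerivAt_sinh x).div (Real.hasDerivAt_cosh x) (Real.cosh_pos x).ne'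
  have h1 : Real.cosh x * Real.cosh x - Real.sinh x * Real.cosh x / Real.cosh x * Real.sinh x
      = 1 := by
    have := Real.cosh_sq_sub_sinh_sq x
    field_simp [(Real.cosh_pos x).ne']
    nlinarith
  have heq : (Real.sinh / Real.cosh) = Real.tanh := by
    funext y; rw [Real.tanh_eq_sinh_div_cosh]; rfl
  rw [heq] at h
  refine h.congr_deriv ?_
  have h2 : Real.cosh x * Real.cosh x - Real.sinh x * Real.sinh x = 1 := by
    nlinarith [Real.cosh_sq_sub_sinh_sq x]
  rw [h2]

lemma tanh_strictMono : StrictMono Real.tanh := by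
  apply strictMono_of_deriv_pos
  intro x
  rw [(tanh_hasDerivAt x).deriv]
  positivity

lemma tanh_abs (x : ℝ) : Real.tanh |x| = |Real.tanh x| := by
  rcases le_or_gt 0 x with h | h
  · rw [abs_of_nonneg h, abs_of_nonneg]
    simpa using tanh_strictMono.le_iff_le.mpr h
  · rw [abs_of_neg h, Real.tanh_neg, abs_of_neg]
    simpa using tanh_strictMono.lt_iff_lt.mpr h

theorem stmt_13 (c : ℝ) (hc : 0 < c) (p z : ℝ → ℝ)
    (hp : ∀ s, p s = - sqrt (c + 1) * tanh (sqrt (c + 1) * s))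
    (hz : ∀ s, z s = - log (cosh (sqrt (c + 1) * s))) :
    ∃ M > (0:ℝ), (c + 1) * tanh (sqrt (c + 1) * M) ^ 2 = 1 ∧
      {s : ℝ | |p s| ≤ 1} = Set.Icc (-M) M ∧
      (∃ C, ∀ s ∈ Set.Ioo (-M) M, |z s| ≤ C) ∧
      (∀ s ∈ Set.Ioo (-M) M, s ≠ 0 → z s < z 0) ∧
      (1 / cosh (sqrt (c + 1) * M)) * sqrt (1 - (c + 1) * tanh (sqrt (c + 1) * M) ^ 2) = 0 ∧
      (1 / cosh (sqrt (c + 1) * (-M))) * sqrt (1 - (c + 1) * tanh (sqrt (c + 1) * (-M)) ^ 2) = 0 ∧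
      |p M| = 1 ∧ |p (-M)| = 1 := by
  set a := sqrt (c + 1) with ha
  have ha2 : a ^ 2 = c + 1 := sq_sqrt (by linarith)
  have ha1 : 1 < a := by nlinarith [Real.sqrt_nonneg (c + 1)]
  have ha0 : 0 < a := by linarith
  set t := Real.log ((a + 1) / (a - 1)) / 2 with ht
  have ht0 : 0 < t := by
    have : 1 < (a + 1) / (a - 1) := by
      rw [lt_div_iff₀ (by linarith)]; linarith
    have := Real.log_pos this
    positivity
  set M := t / a with hM
  have hM0 : 0 < M := by positivity
  have haM : a * M = t := by rw [hM, mul_div_assoc']; exact mul_div_cancel_left₀ t ha0.ne'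
  have htanh : Real.tanh t = 1 / a := by
    have hE : Real.exp t ^ 2 = (a + 1) / (a - 1) := by
      rw [← Real.exp_nat_mul]
      rw [show (2:ℕ) * t = Real.log ((a+1)/(a-1)) by push_cast; rw [ht]; ring]
      exact Real.exp_log (div_pos (by linarith) (by linarith))
    have hEpos := Real.exp_pos t
    rw [Real.tanh_eq_sinh_div_cosh, Real.sinh_eq, Real.cosh_eq]
    rw [Real.exp_neg]
    have h1 : Real.exp t ^ 2 * (a - 1) = a + 1 := by
      rw [hE, div_mul_cancel₀ _ (by linarith : a - 1 ≠ 0)]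
    field_simp
    nlinarith [hEpos]
  have key : (c + 1) * tanh (a * M) ^ 2 = 1 := by
    rw [haM, htanh, ← ha2]
    field_simp
  refine ⟨M, hM0, key, ?_, ?_, ?_, ?_, ?_, ?_, ?_⟩
  · -- set equality
    ext s
    simp only [Set.mem_setOf_eq, Set.mem_Icc, hp]
    rw [← abs_le]
    have : |(- a * tanh (a * s))| = a * |tanh (a * s)| := by
      rw [abs_mul, abs_neg, abs_of_pos ha0]
    rw [this]
    constructor
    · intro h
      have h2 : |tanh (a * s)| ≤ 1 / a := by
        rw [le_div_iff₀ ha0]; linarith [mul_comm a |tanh (a*s)|]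
      rw [← tanh_abs, ← htanh] at h2
      have h3 : |a * s| ≤ t := tanh_strictMono.le_iff_le.mp h2
      rw [abs_mul, abs_of_pos ha0] at h3
      rw [← haM] at h3
      exact le_of_mul_le_mul_left h3 ha0
    · intro h
      have h3 : |a * s| ≤ a * M := by
        rw [abs_mul, abs_of_pos ha0]
        exact mul_le_mul_of_nonneg_left h ha0.le
      rw [haM] at h3
      have h2 : |tanh (a * s)| ≤ 1 / a := by
        rw [← tanh_abs, ← htanh]
        exact tanh_strictMono.le_iff_le.mpr h3
      calc a * |tanh (a * s)| ≤ a * (1 / a) := mul_le_mul_of_nonneg_left h2 ha0.le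
        _ = 1 := by field_simp
  · -- bounded
    refine ⟨Real.log (Real.cosh (a * M)), fun s hs => ?_⟩
    rw [hz, abs_neg, abs_of_nonneg (Real.log_nonneg (Real.one_le_cosh _))]
    apply Real.log_le_log (Real.cosh_pos _)
    rw [Real.cosh_le_cosh]
    rw [abs_mul, abs_mul, abs_of_pos ha0, abs_of_pos hM0]
    apply mul_le_mul_of_nonneg_left _ ha0.le
    exact (abs_le.mpr ⟨hs.1.le, hs.2.le⟩)
  · -- max at 0
    intro s _ hs0
    rw [hz, hz]
    simp only [mul_zero, Real.cosh_zero, Real.log_one, neg_zero, neg_lt, neg_neg]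
    apply Real.log_pos
    rw [Real.one_lt_cosh]
    exact mul_ne_zero ha0.ne' hs0
  · rw [key]; simp
  · have : tanh (a * (-M)) ^ 2 = tanh (a * M) ^ 2 := by
      rw [mul_neg, Real.tanh_neg]; ring
    rw [this, key]; simp
  · rw [hp, haM, htanh]
    rw [abs_mul, abs_neg, abs_of_pos ha0, abs_of_pos (by positivity : (0:ℝ) < 1/a)]
    field_simp
  · rw [hp, mul_neg, haM, Real.tanh_neg, htanh]
    rw [abs_mul, abs_neg, abs_of_pos ha0, abs_neg, abs_of_pos (by positivity : (0:ℝ) < 1/a)]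
    field_simp
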